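/- Low-frequency expansion of the vectorial single layer potential: let x ∈ ℝ³ and let φ : ℝ³ → ℂ³ be such that the functions y ↦ ‖φ(y)‖/|x−y|, y ↦ ‖φ(y)‖ and y ↦ |x−y|²‖φ(y)‖ are all σ-integrable on ∂D = ∂B₁ ∪ ∂B₂ (in particular this holds when x ∉ ∂D and φ is bounded). Then for every k ≥ 0, ‖A_D^k[φ](x) − ∫_{∂D} (−1/(4π|x−y|))·φ(y) dσ(y) − k·∫_{∂D} (−i/(4π))·φ(y) dσ(y) − k²·∫_{∂D} (|x−y|/(8π))·φ(y) dσ(y)‖ ≤ (k³/(24π))·∫_{∂D} |x−y|²·‖φ(y)‖ dσ(y); i.e. A_D^k[φ](x) = Á_D^0[φ](x) + Á_D^1[φ](x)·k + Á_D^2[φ](x)·k² + O(k³) as k → 0⁺. -/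

import Mathlib

open MeasureTheory

/-- The fundamental outgoing solution `Γ^k(z) = -e^{ik|z|}/(4π|z|)`. -/
noncomputable def helmholtzFundamental (k : ℝ) (z : EuclideanSpace ℝ (Fin 3)) : ℂ :=
  -(Complex.exp (Complex.I * k * ‖z‖) / (4 * Real.pi * ‖z‖))

/-- Center of the first ball: `c₁ = (-r - ε/2, 0, 0)`. -/
noncomputable def ctr1 (r ε : ℝ) : EuclideanSpace ℝ (Fin 3) :=
  (WithLp.equiv 2 (Fin 3 → ℝ)).symm ![-r - ε / 2, 0, 0]

/-- Center of the second ball: `c₂ = (r + ε/2, 0, 0)`. -/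
noncomputable def ctr2 (r ε : ℝ) : EuclideanSpace ℝ (Fin 3) :=
  (WithLp.equiv 2 (Fin 3 → ℝ)).symm ![r + ε / 2, 0, 0]

section Aux

open MeasureTheory intervalIntegral

private lemma hder14 (s : ℝ) : HasDerivAt (fun s : ℝ => Complex.exp (Complex.I * s))
    (Complex.I * Complex.exp (Complex.I * s)) s := by
  have h : HasDerivAt (fun z : ℂ => Complex.exp (Complex.I * z))
      (Complex.exp (Complex.I * s) * Complex.I) (s : ℂ) :=
    (Complex.hasDerivAt_exp _).comp _ (by simpa using (hasDerivAt_id (s:ℂ)).const_mul Complex.I)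
  simpa [mul_comm] using h.comp_ofReal

private lemma stepA14 (θ : ℝ) (hθ : 0 ≤ θ) : ‖Complex.exp (Complex.I * θ) - 1‖ ≤ θ := by
  have key : (∫ s in (0:ℝ)..θ, Complex.I * Complex.exp (Complex.I * s))
      = Complex.exp (Complex.I * θ) - 1 := by
    have := integral_eq_sub_of_hasDerivAt (f := fun s : ℝ => Complex.exp (Complex.I * s))
      (f' := fun s : ℝ => Complex.I * Complex.exp (Complex.I * s)) (a := 0) (b := θ)
      (fun s _ => hder14 s)
      (by apply Continuous.intervalIntegrable; continuity)
    simpa using this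
  rw [← key]
  have := intervalIntegral.norm_integral_le_of_norm_le_const (a := 0) (b := θ) (C := 1)
    (f := fun s : ℝ => Complex.I * Complex.exp (Complex.I * s)) ?_
  · simpa [_root_.abs_of_nonneg hθ] using this
  · intro s hs
    have : ‖Complex.exp (Complex.I * s)‖ = 1 := by
      rw [Complex.norm_exp]
      simp
    simp [this]

private lemma stepB14 (θ : ℝ) (hθ : 0 ≤ θ) :
    ‖Complex.exp (Complex.I * θ) - 1 - Complex.I * θ‖ ≤ θ ^ 2 / 2 := by
  have key : (∫ s in (0:ℝ)..θ, (Complex.I * Complex.exp (Complex.I * s) - Complex.I))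
      = Complex.exp (Complex.I * θ) - 1 - Complex.I * θ := by
    have := integral_eq_sub_of_hasDerivAt
      (f := fun s : ℝ => Complex.exp (Complex.I * s) - Complex.I * s)
      (f' := fun s : ℝ => Complex.I * Complex.exp (Complex.I * s) - Complex.I) (a := 0) (b := θ)
      (fun s _ => by
        have h2 : HasDerivAt (fun s : ℝ => (Complex.I * s : ℂ)) Complex.I s := by
          simpa using ((hasDerivAt_id (s:ℂ)).const_mul Complex.I).comp_ofReal
        exact (hder14 s).sub h2)
      (by apply Continuous.intervalIntegrable; continuity)
    simp at this
    rw [this]; ring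
  rw [← key]
  have hb : IntervalIntegrable (fun s : ℝ => s) MeasureTheory.volume 0 θ := by
    apply Continuous.intervalIntegrable; continuity
  have := intervalIntegral.norm_integral_le_of_norm_le (a := 0) (b := θ)
    (f := fun s : ℝ => Complex.I * Complex.exp (Complex.I * s) - Complex.I)
    (g := fun s : ℝ => s) hθ ?_ hb
  · calc _ ≤ |∫ s in (0:ℝ)..θ, s| := this.trans (le_abs_self _)
      _ = θ ^ 2 / 2 := by
        rw [integral_id, show ((θ:ℝ) ^ 2 - 0 ^ 2) / 2 = θ ^ 2 / 2 by ring,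
          _root_.abs_of_nonneg (by positivity)]
  · filter_upwards with s hs
    have h0 : (0:ℝ) ≤ s := le_of_lt hs.1
    calc ‖Complex.I * Complex.exp (Complex.I * s) - Complex.I‖
        = ‖Complex.I * (Complex.exp (Complex.I * s) - 1)‖ := by ring_nf
      _ = ‖Complex.exp (Complex.I * s) - 1‖ := by
          rw [norm_mul]; simp
      _ ≤ s := stepA14 s h0

private lemma stepC14 (θ : ℝ) (hθ : 0 ≤ θ) :
    ‖Complex.exp (Complex.I * θ) - 1 - Complex.I * θ + θ ^ 2 / 2‖ ≤ θ ^ 3 / 6 := by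
  have key : (∫ s in (0:ℝ)..θ,
        (Complex.I * Complex.exp (Complex.I * s) - Complex.I + s))
      = Complex.exp (Complex.I * θ) - 1 - Complex.I * θ + θ ^ 2 / 2 := by
    have := integral_eq_sub_of_hasDerivAt
      (f := fun s : ℝ => Complex.exp (Complex.I * s) - Complex.I * s + (s:ℂ) ^ 2 / 2)
      (f' := fun s : ℝ => Complex.I * Complex.exp (Complex.I * s) - Complex.I + s)
      (a := 0) (b := θ)
      (fun s _ => by
        have h2 : HasDerivAt (fun s : ℝ => (Complex.I * s : ℂ)) Complex.I s := by
          simpa using ((hasDerivAt_id (s:ℂ)).const_mul Complex.I).comp_ofReal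
        have h3 : HasDerivAt (fun s : ℝ => ((s:ℂ) ^ 2 / 2 : ℂ)) (s : ℂ) s := by
          have := ((hasDerivAt_pow 2 (s:ℂ)).div_const 2).comp_ofReal
          simpa using this
        exact ((hder14 s).sub h2).add h3)
      (by apply Continuous.intervalIntegrable; continuity)
    simp at this
    rw [this]; push_cast; ring
  rw [← key]
  have hb : IntervalIntegrable (fun s : ℝ => s ^ 2 / 2) MeasureTheory.volume 0 θ := by
    apply Continuous.intervalIntegrable; continuity
  have := intervalIntegral.norm_integral_le_of_norm_le (a := 0) (b := θ)
    (f := fun s : ℝ => Complex.I * Complex.exp (Complex.I * s) - Complex.I + s)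
    (g := fun s : ℝ => s ^ 2 / 2) hθ ?_ hb
  · calc _ ≤ |∫ s in (0:ℝ)..θ, s ^ 2 / 2| := this.trans (le_abs_self _)
      _ = θ ^ 3 / 6 := by
        rw [intervalIntegral.integral_div, integral_pow,
          show ((θ:ℝ) ^ (2+1) - 0 ^ (2+1)) / ((2:ℕ)+1 : ℝ) / 2 = θ ^ 3 / 6 by push_cast; ring,
          _root_.abs_of_nonneg (by positivity)]
  · filter_upwards with s hs
    have h0 : (0:ℝ) ≤ s := le_of_lt hs.1
    calc ‖Complex.I * Complex.exp (Complex.I * s) - Complex.I + s‖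
        = ‖Complex.I * (Complex.exp (Complex.I * s) - 1 - Complex.I * s)‖ := by
          congr 1
          rw [mul_sub, mul_sub, mul_one]
          rw [show Complex.I * (Complex.I * s) = -s by
            rw [← mul_assoc, Complex.I_mul_I]; ring]
          ring
      _ = ‖Complex.exp (Complex.I * s) - 1 - Complex.I * s‖ := by
          rw [norm_mul]; simp
      _ ≤ s ^ 2 / 2 := stepB14 s h0

end Aux

private lemma coeff14 (k t : ℝ) (hk : 0 ≤ k) (ht : 0 < t) :
    ‖-(Complex.exp (Complex.I * k * t) / (4 * Real.pi * t)) + 1 / (4 * Real.pi * t)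
      + Complex.I * k / (4 * Real.pi) - (k : ℂ) ^ 2 * t / (8 * Real.pi)‖
      ≤ k ^ 3 / (24 * Real.pi) * t ^ 2 := by
  have hπ := Real.pi_pos
  set θ : ℝ := k * t with hθdef
  have hθ : 0 ≤ θ := mul_nonneg hk ht.le
  have hden : ((4 : ℂ) * Real.pi * t) ≠ 0 := by
    push_cast
    refine mul_ne_zero (mul_ne_zero (by norm_num) ?_) ?_ <;>
      exact_mod_cast (by positivity : (0:ℝ) < _).ne'
  have hC : -(Complex.exp (Complex.I * k * t) / (4 * Real.pi * t)) + 1 / (4 * Real.pi * t)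
      + Complex.I * k / (4 * Real.pi) - (k : ℂ) ^ 2 * t / (8 * Real.pi)
      = -((Complex.exp (Complex.I * θ) - 1 - Complex.I * θ + (θ:ℂ) ^ 2 / 2)
          / (4 * Real.pi * t)) := by
    have hπC : (Real.pi : ℂ) ≠ 0 := by exact_mod_cast Real.pi_ne_zero
    have htC : (t : ℂ) ≠ 0 := by exact_mod_cast ht.ne'
    rw [hθdef]
    push_cast
    field_simp
    ring
  rw [hC, norm_neg, norm_div]
  have hdnorm : ‖((4 : ℂ) * Real.pi * t)‖ = 4 * Real.pi * t := by
    rw [show ((4 : ℂ) * Real.pi * t) = ((4 * Real.pi * t : ℝ) : ℂ) by push_cast; ring,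
      Complex.norm_real, Real.norm_eq_abs, _root_.abs_of_pos (by positivity)]
  rw [hdnorm]
  have hnum := stepC14 θ hθ
  calc ‖Complex.exp (Complex.I * θ) - 1 - Complex.I * θ + (θ:ℂ) ^ 2 / 2‖ / (4 * Real.pi * t)
      ≤ (θ ^ 3 / 6) / (4 * Real.pi * t) := by
        apply div_le_div_of_nonneg_right hnum (by positivity)
    _ = k ^ 3 / (24 * Real.pi) * t ^ 2 := by
        rw [hθdef]; field_simp; ring

private lemma aesm14C {c : EuclideanSpace ℝ (Fin 3) → ℂ}
    {φ : EuclideanSpace ℝ (Fin 3) → EuclideanSpace ℂ (Fin 3)}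
    {μ : Measure (EuclideanSpace ℝ (Fin 3))}
    (hc : Measurable c) (hne : ∀ᵐ y ∂μ, c y ≠ 0)
    (h : AEStronglyMeasurable (fun y => c y • φ y) μ) : AEStronglyMeasurable φ μ := by
  have h2 : AEStronglyMeasurable (fun y => (c y)⁻¹ • (c y • φ y)) μ :=
    (hc.inv.aestronglyMeasurable).smul h
  refine h2.congr ?_
  filter_upwards [hne] with y hy
  rw [smul_smul, inv_mul_cancel₀ hy, one_smul]

private lemma measurable_helm14 (k : ℝ) (x : EuclideanSpace ℝ (Fin 3)) :
    Measurable fun y => helmholtzFundamental k (x - y) := by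
  unfold helmholtzFundamental
  have hn : Measurable fun y : EuclideanSpace ℝ (Fin 3) => ‖x - y‖ :=
    (continuous_const.sub continuous_id).norm.measurable
  have hnC : Measurable fun y : EuclideanSpace ℝ (Fin 3) => ((‖x - y‖ : ℝ) : ℂ) :=
    Complex.measurable_ofReal.comp hn
  exact (((Complex.continuous_exp.measurable.comp (hnC.const_mul (Complex.I * k))).div
    (hnC.const_mul (4 * Real.pi)))).neg

/-- Low-frequency expansion of the vectorial single layer potential:
`A_D^k[φ](x) = Á_D^0[φ](x) + Á_D^1[φ](x)·k + Á_D^2[φ](x)·k² + O(k³)` with explicit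
remainder bound `(k³/(24π))·∫_{∂D} |x-y|²‖φ(y)‖ dσ(y)`. -/
theorem stmt_14 (r ε : ℝ) (hr : 0 < r) (hε : 0 < ε)
    (x : EuclideanSpace ℝ (Fin 3))
    (φ : EuclideanSpace ℝ (Fin 3) → EuclideanSpace ℂ (Fin 3))
    (h1 : IntegrableOn (fun y => ‖φ y‖ / ‖x - y‖)
      (Metric.sphere (ctr1 r ε) r ∪ Metric.sphere (ctr2 r ε) r) μH[2])
    (h2 : IntegrableOn (fun y => ‖φ y‖)
      (Metric.sphere (ctr1 r ε) r ∪ Metric.sphere (ctr2 r ε) r) μH[2])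
    (h3 : IntegrableOn (fun y => ‖x - y‖ ^ 2 * ‖φ y‖)
      (Metric.sphere (ctr1 r ε) r ∪ Metric.sphere (ctr2 r ε) r) μH[2]) :
    ∀ k : ℝ, 0 ≤ k →
      ‖(∫ y in Metric.sphere (ctr1 r ε) r ∪ Metric.sphere (ctr2 r ε) r,
            helmholtzFundamental k (x - y) • φ y ∂μH[2])
          - (∫ y in Metric.sphere (ctr1 r ε) r ∪ Metric.sphere (ctr2 r ε) r,
              (-(1 / (4 * Real.pi * ‖x - y‖)) : ℝ) • φ y ∂μH[2])
          - k • (∫ y in Metric.sphere (ctr1 r ε) r ∪ Metric.sphere (ctr2 r ε) r,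
              (-Complex.I / (4 * Real.pi)) • φ y ∂μH[2])
          - k ^ 2 • (∫ y in Metric.sphere (ctr1 r ε) r ∪ Metric.sphere (ctr2 r ε) r,
              (‖x - y‖ / (8 * Real.pi) : ℝ) • φ y ∂μH[2])‖
        ≤ (k ^ 3 / (24 * Real.pi)) *
            ∫ y in Metric.sphere (ctr1 r ε) r ∪ Metric.sphere (ctr2 r ε) r,
              ‖x - y‖ ^ 2 * ‖φ y‖ ∂μH[2] := by
  intro k hk
  have hπ := Real.pi_pos
  set S := Metric.sphere (ctr1 r ε) r ∪ Metric.sphere (ctr2 r ε) r with hS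
  set μS := (μH[2] : Measure (EuclideanSpace ℝ (Fin 3))).restrict S with hμS
  -- ae: y ≠ x
  have hNA : NoAtoms (μH[2] : Measure (EuclideanSpace ℝ (Fin 3))) :=
    Measure.noAtoms_hausdorff _ (by norm_num)
  have hz : ∀ᵐ y ∂μS, y ≠ x := by
    rw [ae_iff]
    refine measure_mono_null (t := {x}) (fun y hy => by simpa using hy) ?_
    exact le_antisymm
      ((Measure.le_iff'.1 Measure.restrict_le_self _).trans (hNA.measure_singleton x).le)
      zero_le
  have hrhs : 0 ≤ ∫ y in S, ‖x - y‖ ^ 2 * ‖φ y‖ ∂μH[2] :=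
    integral_nonneg fun y => by positivity
  by_cases hm : AEStronglyMeasurable φ μS
  · -- φ measurable: the real proof
    have hn : Measurable fun y : EuclideanSpace ℝ (Fin 3) => ‖x - y‖ :=
      (continuous_const.sub continuous_id).norm.measurable
    have hb0 : ∀ y, ‖helmholtzFundamental k (x - y) • φ y‖
        ≤ 1 / (4 * Real.pi) * (‖φ y‖ / ‖x - y‖) := by
      intro y
      rw [norm_smul]
      by_cases hty : ‖x - y‖ = 0
      · simp [helmholtzFundamental, hty]
      have ht : 0 < ‖x - y‖ := lt_of_le_of_ne (norm_nonneg _) (Ne.symm hty)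
      have hh : ‖helmholtzFundamental k (x - y)‖ = 1 / (4 * Real.pi * ‖x - y‖) := by
        unfold helmholtzFundamental
        rw [norm_neg, norm_div, Complex.norm_exp]
        rw [show (Complex.I * k * (‖x - y‖ : ℝ)).re = 0 by simp, Real.exp_zero]
        congr 1
        rw [show ((4:ℂ) * Real.pi * (‖x - y‖ : ℝ)) = ((4 * Real.pi * ‖x - y‖ : ℝ) : ℂ) by
            push_cast; ring,
          Complex.norm_real, Real.norm_eq_abs, _root_.abs_of_pos (by positivity)]
      rw [hh]
      apply le_of_eq
      field_simp
    have I0 : Integrable (fun y => helmholtzFundamental k (x - y) • φ y) μS := by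
      refine Integrable.mono' (h1.const_mul (1 / (4 * Real.pi)))
        (((measurable_helm14 k x).aestronglyMeasurable).smul hm) (ae_of_all _ hb0)
    have I1 : Integrable (fun y => (-(1 / (4 * Real.pi * ‖x - y‖)) : ℝ) • φ y) μS := by
      refine Integrable.mono' (h1.const_mul (1 / (4 * Real.pi)))
        ((((measurable_const.div (hn.const_mul (4 * Real.pi))).neg).aestronglyMeasurable).smul hm)
        (ae_of_all _ fun y => ?_)
      rw [norm_smul, Real.norm_eq_abs, abs_neg, _root_.abs_of_nonneg (by positivity)]
      apply le_of_eq
      rw [one_div, one_div, mul_inv, div_eq_mul_inv]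
      ring
    have I2 : Integrable (fun y => (-Complex.I / (4 * Real.pi)) • φ y) μS := by
      refine Integrable.mono' (h2.const_mul (1 / (4 * Real.pi)))
        (hm.const_smul (-Complex.I / (4 * Real.pi))) (ae_of_all _ fun y => ?_)
      rw [norm_smul]
      apply le_of_eq
      congr 1
      rw [norm_div, norm_neg, Complex.norm_I,
        show ((4:ℂ) * Real.pi) = ((4 * Real.pi : ℝ) : ℂ) by push_cast; ring,
        Complex.norm_real, Real.norm_eq_abs, _root_.abs_of_pos (by positivity)]
    have I3 : Integrable (fun y => (‖x - y‖ / (8 * Real.pi) : ℝ) • φ y) μS := by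
      refine Integrable.mono' ((h2.add h3).const_mul (1 / (16 * Real.pi)))
        (((hn.div_const (8 * Real.pi)).aestronglyMeasurable).smul hm)
        (ae_of_all _ fun y => ?_)
      simp only [Pi.add_apply]
      rw [norm_smul, Real.norm_eq_abs, _root_.abs_of_nonneg (by positivity)]
      have h2t : 2 * ‖x - y‖ ≤ 1 + ‖x - y‖ ^ 2 := by nlinarith [sq_nonneg (‖x - y‖ - 1)]
      have hφn : (0:ℝ) ≤ ‖φ y‖ := norm_nonneg _
      have hrw : 1 / (16 * Real.pi) * (‖φ y‖ + ‖x - y‖ ^ 2 * ‖φ y‖)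
          = (‖φ y‖ + ‖x - y‖ ^ 2 * ‖φ y‖) / (16 * Real.pi) := by ring
      rw [hrw, div_mul_eq_mul_div, div_le_div_iff₀ (by positivity) (by positivity)]
      nlinarith [mul_nonneg (mul_nonneg (sub_nonneg.mpr h2t) hφn) hπ.le]
    have I01 : Integrable (fun y => helmholtzFundamental k (x - y) • φ y
        - (-(1 / (4 * Real.pi * ‖x - y‖)) : ℝ) • φ y) μS := I0.sub I1
    have I2k : Integrable (fun y => k • ((-Complex.I / (4 * Real.pi)) • φ y)) μS := I2.smul k
    have I3k : Integrable (fun y => k ^ 2 • ((‖x - y‖ / (8 * Real.pi) : ℝ) • φ y)) μS :=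
      I3.smul (k ^ 2)
    have key : (∫ y, helmholtzFundamental k (x - y) • φ y ∂μS)
          - (∫ y, (-(1 / (4 * Real.pi * ‖x - y‖)) : ℝ) • φ y ∂μS)
          - k • (∫ y, (-Complex.I / (4 * Real.pi)) • φ y ∂μS)
          - k ^ 2 • (∫ y, (‖x - y‖ / (8 * Real.pi) : ℝ) • φ y ∂μS)
        = ∫ y, (helmholtzFundamental k (x - y) • φ y
            - (-(1 / (4 * Real.pi * ‖x - y‖)) : ℝ) • φ y
            - k • ((-Complex.I / (4 * Real.pi)) • φ y)
            - k ^ 2 • ((‖x - y‖ / (8 * Real.pi) : ℝ) • φ y)) ∂μS := by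
      have I012 : Integrable (fun y => helmholtzFundamental k (x - y) • φ y
          - (-(1 / (4 * Real.pi * ‖x - y‖)) : ℝ) • φ y
          - k • ((-Complex.I / (4 * Real.pi)) • φ y)) μS := I01.sub I2k
      rw [← integral_smul k, ← integral_smul (k ^ 2), ← integral_sub I0 I1,
        ← integral_sub I01 I2k, ← integral_sub I012 I3k]
    rw [key]
    refine le_trans (norm_integral_le_of_norm_le
      (h3.const_mul (k ^ 3 / (24 * Real.pi))) ?_) ?_
    · filter_upwards [hz] with y hy
      have ht : 0 < ‖x - y‖ := by
        rw [norm_pos_iff]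
        exact sub_ne_zero.mpr (Ne.symm hy)
      have e2 : k • ((-Complex.I / (4 * Real.pi)) • φ y)
          = ((k : ℂ) * (-Complex.I / (4 * Real.pi))) • φ y := by
        rw [← smul_smul, Complex.coe_smul]
      have e3 : k ^ 2 • ((‖x - y‖ / (8 * Real.pi) : ℝ) • φ y)
          = (((k : ℂ)) ^ 2 * ((‖x - y‖ / (8 * Real.pi) : ℝ) : ℂ)) • φ y := by
        rw [← smul_smul, Complex.coe_smul, ← Complex.ofReal_pow, Complex.coe_smul]
      rw [e2, e3,
        show (-(1 / (4 * Real.pi * ‖x - y‖)) : ℝ) • φ y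
          = ((-(1 / (4 * Real.pi * ‖x - y‖)) : ℝ) : ℂ) • φ y from (Complex.coe_smul _ _).symm,
        ← sub_smul, ← sub_smul, ← sub_smul, norm_smul]
      have hC : helmholtzFundamental k (x - y)
            - ((-(1 / (4 * Real.pi * ‖x - y‖)) : ℝ) : ℂ)
            - (k : ℂ) * (-Complex.I / (4 * Real.pi))
            - ((k : ℂ)) ^ 2 * ((‖x - y‖ / (8 * Real.pi) : ℝ) : ℂ)
          = -(Complex.exp (Complex.I * k * ‖x - y‖) / (4 * Real.pi * ‖x - y‖))
            + 1 / (4 * Real.pi * ‖x - y‖)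
            + Complex.I * k / (4 * Real.pi)
            - (k : ℂ) ^ 2 * ‖x - y‖ / (8 * Real.pi) := by
        unfold helmholtzFundamental
        push_cast
        ring
      rw [hC]
      calc ‖(-(Complex.exp (Complex.I * k * ‖x - y‖) / (4 * Real.pi * ‖x - y‖))
            + 1 / (4 * Real.pi * ‖x - y‖)
            + Complex.I * k / (4 * Real.pi)
            - (k : ℂ) ^ 2 * ‖x - y‖ / (8 * Real.pi))‖ * ‖φ y‖
          ≤ (k ^ 3 / (24 * Real.pi) * ‖x - y‖ ^ 2) * ‖φ y‖ :=
            mul_le_mul_of_nonneg_right (coeff14 k ‖x - y‖ hk ht) (norm_nonneg _)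
        _ = k ^ 3 / (24 * Real.pi) * (‖x - y‖ ^ 2 * ‖φ y‖) := by ring
    · exact le_of_eq (integral_const_mul _ _)
  · -- φ not a.e. strongly measurable: all integrals vanish
    have hz' : ∀ᵐ y ∂μS, ‖x - y‖ ≠ 0 := by
      filter_upwards [hz] with y hy
      exact norm_ne_zero_iff.mpr (sub_ne_zero.mpr (Ne.symm hy))
    have hn : Measurable fun y : EuclideanSpace ℝ (Fin 3) => ‖x - y‖ :=
      (continuous_const.sub continuous_id).norm.measurable
    have hnC : Measurable fun y : EuclideanSpace ℝ (Fin 3) => ((‖x - y‖ : ℝ) : ℂ) :=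
      Complex.measurable_ofReal.comp hn
    have hπC : ((Real.pi : ℝ) : ℂ) ≠ 0 := by exact_mod_cast Real.pi_ne_zero
    have e0 : (∫ y, helmholtzFundamental k (x - y) • φ y ∂μS) = 0 := by
      refine integral_non_aestronglyMeasurable fun h => hm ?_
      refine aesm14C (measurable_helm14 k x) ?_ h
      filter_upwards [hz'] with y hy
      unfold helmholtzFundamental
      refine neg_ne_zero.mpr (div_ne_zero (Complex.exp_ne_zero _) ?_)
      exact mul_ne_zero (mul_ne_zero (by norm_num) hπC) (by exact_mod_cast hy)
    have e1 : (∫ y, (-(1 / (4 * Real.pi * ‖x - y‖)) : ℝ) • φ y ∂μS) = 0 := by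
      refine integral_non_aestronglyMeasurable fun h => hm ?_
      refine aesm14C (c := fun y => ((-(1 / (4 * Real.pi * ‖x - y‖)) : ℝ) : ℂ))
        (Complex.measurable_ofReal.comp ((measurable_const.div (hn.const_mul (4 * Real.pi))).neg))
        ?_ h
      filter_upwards [hz'] with y hy
      have ht : 0 < ‖x - y‖ := lt_of_le_of_ne (norm_nonneg _) (Ne.symm hy)
      exact_mod_cast neg_ne_zero.mpr (by positivity : (1 / (4 * Real.pi * ‖x - y‖) : ℝ) ≠ 0)
    have e2 : (∫ y, (-Complex.I / (4 * Real.pi)) • φ y ∂μS) = 0 := by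
      refine integral_non_aestronglyMeasurable fun h => hm ?_
      refine aesm14C (c := fun _ => (-Complex.I / (4 * Real.pi))) measurable_const
        (ae_of_all _ fun y => ?_) h
      refine div_ne_zero (neg_ne_zero.mpr Complex.I_ne_zero) ?_
      exact mul_ne_zero (by norm_num) hπC
    have e3 : (∫ y, (‖x - y‖ / (8 * Real.pi) : ℝ) • φ y ∂μS) = 0 := by
      refine integral_non_aestronglyMeasurable fun h => hm ?_
      refine aesm14C (c := fun y => ((‖x - y‖ / (8 * Real.pi) : ℝ) : ℂ))
        (Complex.measurable_ofReal.comp (hn.div_const (8 * Real.pi))) ?_ h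
      filter_upwards [hz'] with y hy
      have ht : 0 < ‖x - y‖ := lt_of_le_of_ne (norm_nonneg _) (Ne.symm hy)
      exact_mod_cast (by positivity : (‖x - y‖ / (8 * Real.pi) : ℝ) ≠ 0)
    rw [e0, e1, e2, e3]
    simp only [smul_zero, sub_zero, norm_zero]
    exact mul_nonneg (by positivity) hrhs
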